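/- arXiv:2105.13683 — 4 statements merged into one kernel-verified Lean document; each statement's English description precedes it below -/
import Mathlib

section
/- The time-elapse of a zone is a zone: if Z is a set of valuations defined by a finite conjunction of atomic constraints of the forms x ∼ c and x − y ∼ c (∼ ∈ {≤,≥,<,>}), then the set {v+δ | v ∈ Z, δ ∈ ℝ≥0} is also definable by such a conjunction (namely, by dropping all upper-bound constraints on single clocks while keeping difference constraints). -/
open Classical

/-- Clock valuations over a set `X` of clocks. -/
abbrev Val (X : Type*) := X → ℝ

/-- Delay a valuation by `δ`. -/
noncomputable def addD {X : Type*} (v : Val X) (δ : ℝ) : Val X := fun x => v x + δ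

/-- Reset the clocks in `R` to `0`. -/
noncomputable def resetV {X : Type*} (R : Set X) (v : Val X) : Val X :=
  fun x => if x ∈ R then 0 else v x

/-- Time elapse of a set of valuations. -/
def elapse {X : Type*} (Z : Set (Val X)) : Set (Val X) :=
  {w | ∃ v ∈ Z, ∃ δ : ℝ, 0 ≤ δ ∧ w = addD v δ}

/-- Zone successor under a guard `g` and reset set `R`. -/
def succZ {X : Type*} (g : Set (Val X)) (R : Set X) (Z : Set (Val X)) : Set (Val X) :=
  elapse (resetV R '' (g ∩ Z))

/-- Comparison operators `≤, ≥, <, >`. -/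
inductive Cmp where
  | le | ge | lt | gt

def Cmp.sat : Cmp → ℝ → ℝ → Prop
  | .le, a, b => a ≤ b
  | .ge, a, b => b ≤ a
  | .lt, a, b => a < b
  | .gt, a, b => b < a

/-- Atomic constraints `x ∼ c` and `x - y ∼ c` with integer constant `c`. -/
inductive Atom (X : Type*) where
  | single (x : X) (c : Cmp) (k : ℤ)
  | diff (x y : X) (c : Cmp) (k : ℤ)

def Atom.sat {X : Type*} (v : Val X) : Atom X → Prop
  | .single x c k => c.sat (v x) (k : ℝ)
  | .diff x y c k => c.sat (v x - v y) (k : ℝ)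

/-- The set of valuations satisfying a finite conjunction of atomic constraints. -/
def satSet {X : Type*} (L : List (Atom X)) : Set (Val X) :=
  {v | ∀ a ∈ L, a.sat v}

namespace ElapseAux

/-- A lower bound `(a, s)` on `δ`: `a < δ` if `s`, else `a ≤ δ`. -/
def lsat (p : ℝ × Bool) (δ : ℝ) : Prop := if p.2 then p.1 < δ else p.1 ≤ δ

/-- An upper bound `(b, t)` on `δ`: `δ < b` if `t`, else `δ ≤ b`. -/
def usat (p : ℝ × Bool) (δ : ℝ) : Prop := if p.2 then δ < p.1 else δ ≤ p.1

/-- Compatibility of a lower and an upper bound. -/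
def bcomp (l u : ℝ × Bool) : Prop := if l.2 || u.2 then l.1 < u.1 else l.1 ≤ u.1

lemma foldmin_le (i : ℝ) (l : List ℝ) : ∀ b ∈ l, l.foldr min i ≤ b := by
  induction l with
  | nil => simp
  | cons a t ih =>
    intro b hb
    rcases List.mem_cons.1 hb with rfl | hb
    · exact min_le_left _ _
    · exact le_trans (min_le_right _ _) (ih b hb)

lemma foldmin_le_init (i : ℝ) (l : List ℝ) : l.foldr min i ≤ i := by
  induction l with
  | nil => exact le_refl _
  | cons a t ih => exact le_trans (min_le_right _ _) ih

lemma lt_foldmin {a i : ℝ} {l : List ℝ} (h : a < i) (h2 : ∀ b ∈ l, a < b) :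
    a < l.foldr min i := by
  induction l with
  | nil => exact h
  | cons c t ih =>
    exact lt_min (h2 c (List.mem_cons_self)) (ih fun b hb => h2 b (List.mem_cons_of_mem _ hb))

lemma lsat_mono {p : ℝ × Bool} {δ δ' : ℝ} (h : lsat p δ) (hle : δ ≤ δ') : lsat p δ' := by
  unfold lsat at *
  split at h <;> simp_all <;> linarith

/-- Key satisfiability lemma: if every lower bound is compatible with every
upper bound, there exists a `δ` satisfying all bounds. -/
lemma interval (ups : List (ℝ × Bool)) :
    ∀ lows : List (ℝ × Bool), (∀ l ∈ lows, ∀ u ∈ ups, bcomp l u) →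
    ∃ δ, (∀ l ∈ lows, lsat l δ) ∧ ∀ u ∈ ups, usat u δ := by
  intro lows
  induction lows with
  | nil =>
    intro _
    refine ⟨(ups.map Prod.fst).foldr min 1 - 1, by simp, fun u hu => ?_⟩
    have : (ups.map Prod.fst).foldr min 1 ≤ u.1 :=
      foldmin_le _ _ u.1 (List.mem_map.2 ⟨u, hu, rfl⟩)
    unfold usat
    split <;> linarith
  | cons l t ih =>
    intro h
    obtain ⟨δ, hlo, hup⟩ := ih fun p hp u hu => h p (List.mem_cons_of_mem _ hp) u hu
    have hl : ∀ u ∈ ups, bcomp l u := h l (List.mem_cons_self)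
    by_cases hs : l.2 = true
    · -- strict lower bound
      set m := (ups.map Prod.fst).foldr min (l.1 + 2) with hm
      have hlm : l.1 < m := by
        apply lt_foldmin (by linarith)
        intro b hb
        obtain ⟨u, hu, rfl⟩ := List.mem_map.1 hb
        have := hl u hu
        unfold bcomp at this
        rw [hs] at this
        simpa using this
      refine ⟨max δ ((l.1 + m) / 2), ?_, ?_⟩
      · intro p hp
        rcases List.mem_cons.1 hp with rfl | hp
        · unfold lsat; rw [hs]; simp only [if_true]
          calc p.1 < (p.1 + m) / 2 := by linarith
            _ ≤ max δ ((p.1 + m) / 2) := le_max_right _ _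
        · exact lsat_mono (hlo p hp) (le_max_left _ _)
      · intro u hu
        have hmu : m ≤ u.1 := foldmin_le _ _ u.1 (List.mem_map.2 ⟨u, hu, rfl⟩)
        have h1 : (l.1 + m) / 2 < u.1 := by linarith
        have h2 := hup u hu
        unfold usat at *
        split at h2 <;> rename_i ht <;> simp only [ht, if_true, if_false] <;>
          rw [max_lt_iff] at * <;> first
          | exact ⟨h2, h1⟩
          | (rw [max_le_iff]; exact ⟨h2, le_of_lt h1⟩)
    · -- weak lower bound
      have hs' : l.2 = false := by simpa using hs
      refine ⟨max δ l.1, ?_, ?_⟩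
      · intro p hp
        rcases List.mem_cons.1 hp with rfl | hp
        · unfold lsat; rw [hs']; simpa using le_max_right _ _
        · exact lsat_mono (hlo p hp) (le_max_left _ _)
      · intro u hu
        have h2 := hup u hu
        have h1 := hl u hu
        unfold bcomp at h1
        rw [hs'] at h1
        unfold usat at *
        split at h2 <;> rename_i ht <;> simp only [ht, if_true, if_false] at * <;>
          first
          | (rw [max_lt_iff]; exact ⟨h2, h1⟩)
          | (rw [max_le_iff]; exact ⟨h2, h1⟩)

/-- Lower bound on `δ` induced by an atom at valuation `w`. -/
def lowOf {X : Type*} (w : Val X) : Atom X → Option (ℝ × Bool)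
  | .single x .le k => some (w x - k, false)
  | .single x .lt k => some (w x - k, true)
  | _ => none

/-- Upper bound on `δ` induced by an atom at valuation `w`. -/
def upOf {X : Type*} (w : Val X) : Atom X → Option (ℝ × Bool)
  | .single x .ge k => some (w x - k, false)
  | .single x .gt k => some (w x - k, true)
  | _ => none

/-- Atoms kept unchanged in the elapsed zone. -/
def keep {X : Type*} : Atom X → Bool
  | .diff _ _ _ _ => true
  | .single _ .ge _ => true
  | .single _ .gt _ => true
  | _ => false

/-- Combination of an upper-bound-on-clock atom with a lower-bound-on-clock atom. -/
def combine {X : Type*} : Atom X → Atom X → Option (Atom X)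
  | .single x .le c, .single y .ge d => some (.diff x y .le (c - d))
  | .single x .le c, .single y .gt d => some (.diff x y .lt (c - d))
  | .single x .lt c, .single y .ge d => some (.diff x y .lt (c - d))
  | .single x .lt c, .single y .gt d => some (.diff x y .lt (c - d))
  | _, _ => none

lemma mem_elapse {X : Type*} (L : List (Atom X)) (w : Val X) :
    w ∈ elapse (satSet L) ↔ ∃ δ : ℝ, 0 ≤ δ ∧ ∀ a ∈ L, a.sat (fun x => w x - δ) := by
  constructor
  · rintro ⟨v, hv, δ, hδ, rfl⟩
    refine ⟨δ, hδ, fun a ha => ?_⟩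
    have : (fun x => addD v δ x - δ) = v := by funext x; simp [addD]
    rw [this]; exact hv a ha
  · rintro ⟨δ, hδ, hsat⟩
    refine ⟨fun x => w x - δ, hsat, δ, hδ, ?_⟩
    funext x; simp [addD]

end ElapseAux

open ElapseAux in
/-- The time elapse of a zone is a zone: if `Z` is definable by a finite
conjunction of atomic constraints, then so is `→Z`. -/
theorem stmt1 {X : Type*} (Z : Set (Val X))
    (hZ : ∃ L : List (Atom X), Z = satSet L) :
    ∃ L' : List (Atom X), elapse Z = satSet L' := by
  obtain ⟨L, rfl⟩ := hZ
  refine ⟨L.filter keep ++ L.flatMap (fun a => L.filterMap (combine a)), ?_⟩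
  ext w
  rw [mem_elapse]
  constructor
  · -- elapse ⊆ satSet L'
    rintro ⟨δ, hδ, hsat⟩
    intro a' ha'
    rcases List.mem_append.1 ha' with h | h
    · -- kept atoms
      obtain ⟨ha, hk⟩ := List.mem_filter.1 h
      have := hsat a' ha
      cases a' with
      | diff x y c k =>
        cases c <;> simp only [Atom.sat, Cmp.sat] at this ⊢ <;> linarith
      | single x c k =>
        cases c <;> simp [keep] at hk <;>
          simp only [Atom.sat, Cmp.sat] at this ⊢ <;> linarith
    · -- combined atoms
      obtain ⟨a, ha, h⟩ := List.mem_flatMap.1 h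
      obtain ⟨b, hb, hc⟩ := List.mem_filterMap.1 h
      have hsa := hsat a ha
      have hsb := hsat b hb
      cases a with
      | diff _ _ _ _ => simp [combine] at hc
      | single x ca c =>
        cases b with
        | diff _ _ _ _ => cases ca <;> simp [combine] at hc
        | single y cb d =>
          cases ca <;> cases cb <;> simp [combine] at hc <;> subst hc <;>
            simp only [Atom.sat, Cmp.sat] at hsa hsb ⊢ <;> push_cast <;> linarith
  · -- satSet L' ⊆ elapse
    intro hw
    have hcompat : ∀ l ∈ (0, false) :: L.filterMap (lowOf w),
        ∀ u ∈ L.filterMap (upOf w), bcomp l u := by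
      intro l hl u hu
      obtain ⟨b, hbL, hbu⟩ := List.mem_filterMap.1 hu
      rcases List.mem_cons.1 hl with rfl | hl
      · -- the zero lower bound vs upper bound from `b`
        have hbK : b ∈ L.filter keep ++ L.flatMap (fun a => L.filterMap (combine a)) := by
          refine List.mem_append.2 (Or.inl (List.mem_filter.2 ⟨hbL, ?_⟩))
          cases b with
          | diff _ _ _ _ => simp [upOf] at hbu
          | single y cb d => cases cb <;> simp [upOf, keep] at hbu ⊢
        have hbsat := hw _ hbK
        cases b with
        | diff _ _ _ _ => simp [upOf] at hbu
        | single y cb d =>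
          cases cb <;> simp [upOf] at hbu <;> subst hbu <;>
            simp only [Atom.sat, Cmp.sat] at hbsat <;>
            simp [bcomp] <;> linarith
      · -- lower bound from atom `a` vs upper bound from `b`
        obtain ⟨a, haL, hal⟩ := List.mem_filterMap.1 hl
        cases a with
        | diff _ _ _ _ => simp [lowOf] at hal
        | single x ca c =>
          cases b with
          | diff _ _ _ _ => simp [upOf] at hbu
          | single y cb d =>
            cases ca <;> simp [lowOf] at hal
            all_goals cases cb <;> simp [upOf] at hbu
            all_goals
              subst hal
              subst hbu
              have hcomb : _ ∈ L.filter keep ++ L.flatMap (fun a => L.filterMap (combine a)) :=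
                List.mem_append.2 (Or.inr (List.mem_flatMap.2
                  ⟨_, haL, List.mem_filterMap.2 ⟨_, hbL, rfl⟩⟩))
              have := hw _ hcomb
              simp only [Atom.sat, Cmp.sat] at this
              push_cast at this
              simp [bcomp] <;> linarith
    obtain ⟨δ, hlo, hup⟩ := interval (L.filterMap (upOf w))
      ((0, false) :: L.filterMap (lowOf w)) hcompat
    have hδ0 : (0 : ℝ) ≤ δ := by
      have := hlo _ (List.mem_cons_self)
      simpa [lsat] using this
    refine ⟨δ, hδ0, fun a ha => ?_⟩
    cases a with
    | diff x y c k =>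
      have haL' : (Atom.diff x y c k) ∈
          L.filter keep ++ L.flatMap (fun a => L.filterMap (combine a)) :=
        List.mem_append.2 (Or.inl (List.mem_filter.2 ⟨ha, by simp [keep]⟩))
      have := hw _ haL'
      cases c <;> simp only [Atom.sat, Cmp.sat] at this ⊢ <;> linarith
    | single x c k =>
      cases c
      · -- le : lower bound on δ
        have : lsat (w x - k, false) δ :=
          hlo _ (List.mem_cons_of_mem _
            (List.mem_filterMap.2 ⟨_, ha, by simp [lowOf]⟩))
        simp only [lsat, if_neg Bool.false_ne_true] at this
        simp only [Atom.sat, Cmp.sat]; linarith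
      · -- ge : upper bound on δ
        have : usat (w x - k, false) δ :=
          hup _ (List.mem_filterMap.2 ⟨_, ha, by simp [upOf]⟩)
        simp only [usat, if_neg Bool.false_ne_true] at this
        simp only [Atom.sat, Cmp.sat]; linarith
      · -- lt
        have : lsat (w x - k, true) δ :=
          hlo _ (List.mem_cons_of_mem _
            (List.mem_filterMap.2 ⟨_, ha, by simp [lowOf]⟩))
        simp [lsat] at this
        simp only [Atom.sat, Cmp.sat]; linarith
      · -- gt
        have : usat (w x - k, true) δ :=
          hup _ (List.mem_filterMap.2 ⟨_, ha, by simp [upOf]⟩)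
        simp [usat] at this
        simp only [Atom.sat, Cmp.sat]; linarith
end

section
/- In a pushdown timed automaton, every run from a configuration with empty stack to a configuration with empty stack whose last discrete transition is a pop decomposes uniquely at the matching push: there is an index i such that the stack is empty at step i, the (i+1)-th configuration's stack is a single symbol a pushed at step i, the stack height stays at least 1 strictly between i+1 and the final pop, and the final pop removes that same symbol a. -/
open Classical

/-- Stack operations of a pushdown timed automaton. -/
inductive StackOp (Γ : Type*) where
  | nop : StackOp Γ
  | push (a : Γ) : StackOp Γ
  | pop (a : Γ) : StackOp Γ

/-- A pushdown timed automaton, given by its set of transitions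
`(q, g, op, R, q')`. -/
structure PDTA (Q X Γ : Type*) where
  trans : Set (Q × Set (Val X) × StackOp Γ × Set X × Q)

/-- Configurations `(q, v, χ)` of a PDTA. -/
abbrev Config (Q X Γ : Type*) := Q × Val X × List Γ

/-- Effect of a stack operation (top of the stack is the last element). -/
def opOK {Γ : Type*} : StackOp Γ → List Γ → List Γ → Prop
  | .nop, χ, χ' => χ' = χ
  | .push a, χ, χ' => χ' = χ ++ [a]
  | .pop a, χ, χ' => χ = χ' ++ [a]

/-- One step of the PDTA semantics: a time delay or a discrete transition. -/
inductive PStep {Q X Γ : Type*} (A : PDTA Q X Γ) : Config Q X Γ → Config Q X Γ → Prop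
  | delay (q : Q) (v : Val X) (χ : List Γ) (δ : ℝ) (hδ : 0 ≤ δ) :
      PStep A (q, v, χ) (q, addD v δ, χ)
  | disc (q q' : Q) (g : Set (Val X)) (op : StackOp Γ) (R : Set X) (v : Val X)
      (χ χ' : List Γ) (ht : (q, g, op, R, q') ∈ A.trans) (hg : v ∈ g)
      (hop : opOK op χ χ') :
      PStep A (q, v, χ) (q', resetV R v, χ')

/-- `c 0, c 1, …, c n` is a run of the PDTA `A`. -/
def IsRun {Q X Γ : Type*} (A : PDTA Q X Γ) (n : ℕ) (c : ℕ → Config Q X Γ) : Prop :=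
  ∀ k < n, PStep A (c k) (c (k + 1))


lemma step_stack {Q X Γ : Type*} {A : PDTA Q X Γ} {c1 c2 : Config Q X Γ}
    (h : PStep A c1 c2) :
    c2.2.2 = c1.2.2 ∨ (∃ a, c2.2.2 = c1.2.2 ++ [a]) ∨ (∃ a, c1.2.2 = c2.2.2 ++ [a]) := by
  cases h with
  | delay q v χ δ hδ => left; rfl
  | disc q q' g op R v χ χ' ht hg hop =>
    cases op with
    | nop => left; exact hop
    | push a => right; left; exact ⟨a, hop⟩
    | pop a => right; right; exact ⟨a, hop⟩

lemma step_head {Q X Γ : Type*} {A : PDTA Q X Γ} {c1 c2 : Config Q X Γ}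
    (h : PStep A c1 c2) (h1 : c1.2.2 ≠ []) (h2 : c2.2.2 ≠ []) :
    c2.2.2.head? = c1.2.2.head? := by
  rcases step_stack h with heq | ⟨a, heq⟩ | ⟨a, heq⟩
  · rw [heq]
  · obtain ⟨x, xs, hx⟩ := List.exists_cons_of_ne_nil h1
    rw [heq, hx]; simp
  · obtain ⟨x, xs, hx⟩ := List.exists_cons_of_ne_nil h2
    rw [heq, hx]; simp

/-- A well-nested run whose last step is a pop (of the symbol `b`) decomposes
uniquely at the matching push: there is a unique index `i` such that the stack
is empty at `i`, at `i+1` it is the single symbol `b` (pushed at step `i`),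
and the stack stays nonempty strictly between `i+1` and the final pop, which
removes that same symbol `b`. -/
theorem stmt7 {Q X Γ : Type*} (A : PDTA Q X Γ) (n : ℕ) (c : ℕ → Config Q X Γ)
    (b : Γ) (hn : 1 ≤ n) (hrun : IsRun A n c)
    (h0 : (c 0).2.2 = ([] : List Γ))
    (hend : (c n).2.2 = ([] : List Γ))
    (hpop : (c (n - 1)).2.2 = [b]) :
    ∃! i : ℕ, i + 1 < n ∧ (c i).2.2 = ([] : List Γ) ∧ (c (i + 1)).2.2 = [b] ∧
      ∀ k, i < k → k < n → (c k).2.2 ≠ ([] : List Γ) := by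
  classical
  have hn2 : 2 ≤ n := by
    by_contra h
    have hn1 : n = 1 := by omega
    subst hn1
    rw [show (1:ℕ) - 1 = 0 from rfl, h0] at hpop
    simp at hpop
  set P : ℕ → Prop := fun k => (c k).2.2 = ([] : List Γ) with hP
  set i := Nat.findGreatest P (n - 1) with hi
  have hP0 : P 0 := h0
  have hPi : P i := Nat.findGreatest_spec (Nat.zero_le _) hP0
  have hgreat : ∀ k, i < k → k ≤ n - 1 → ¬ P k := fun k hk hk' =>
    Nat.findGreatest_is_greatest hk hk'
  have hile : i ≤ n - 1 := Nat.findGreatest_le _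
  have hPi' : (c i).2.2 = ([] : List Γ) := hPi
  have hine : i ≠ n - 1 := by
    intro h
    rw [h, hpop] at hPi'
    simp at hPi'
  have hi1 : i + 1 < n := by omega
  have hnonempty : ∀ k, i < k → k < n → (c k).2.2 ≠ ([] : List Γ) := by
    intro k hk hk'
    exact hgreat k hk (by omega)
  -- step i → i+1 is a push of some a
  have hstep : PStep A (c i) (c (i + 1)) := hrun i (by omega)
  obtain ⟨a, ha⟩ : ∃ a, (c (i + 1)).2.2 = [a] := by
    rcases step_stack hstep with heq | ⟨a, heq⟩ | ⟨a, heq⟩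
    · exact absurd (heq.trans hPi') (hnonempty (i+1) (by omega) (by omega))
    · exact ⟨a, by rw [heq, hPi']; simp⟩
    · rw [hPi'] at heq; exact absurd heq (by simp)
  -- head is constant between i+1 and n-1
  have hhead : ∀ m, i + 1 ≤ m → m ≤ n - 1 → (c m).2.2.head? = some a := by
    intro m hm
    induction m, hm using Nat.le_induction with
    | base => intro _; rw [ha]; rfl
    | succ m hm ih =>
      intro hm'
      have h1 : (c m).2.2 ≠ [] := hnonempty m (by omega) (by omega)
      have h2 : (c (m+1)).2.2 ≠ [] := hnonempty (m+1) (by omega) (by omega)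
      rw [step_head (hrun m (by omega)) h1 h2]
      exact ih (by omega)
  have hab : a = b := by
    have := hhead (n - 1) (by omega) le_rfl
    rw [hpop] at this
    simpa using this.symm
  refine ⟨i, ⟨hi1, hPi', by rw [ha, hab], hnonempty⟩, ?_⟩
  rintro j ⟨hj1, hj2, hj3, hj4⟩
  rcases lt_trichotomy j i with h | h | h
  · exact absurd hPi' (hj4 i h (by omega))
  · exact h
  · exact absurd hj2 (hnonempty j h (by omega))
end

section
/- Finiteness of the fixed point for PDTA rules: if the simulation ≼ is strongly finite (the induced equivalence ∼ has finite index), then in any (possibly transfinite) application of the Start/Internal/Push/Pop inductive rules, the root set 𝔖 remains finite and each set S_{(q,Z)} for (q,Z) ∈ 𝔖 remains finite; hence a fixed point is reached in finitely many rule applications. -/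
open Classical

/-- `sim` is a simulation relation on configurations of the PDTA `A`
(stack-independent, compatible with delays, guards and resets). -/
def IsSim {Q X Γ : Type*} (A : PDTA Q X Γ) (sim : Q → Val X → Val X → Prop) : Prop :=
  (∀ q (v v' : Val X) (δ : ℝ), 0 ≤ δ → sim q v v' → sim q (addD v δ) (addD v' δ)) ∧
  (∀ q q' g op R, (q, g, op, R, q') ∈ A.trans → ∀ v v', sim q v v' → v ∈ g →
    v' ∈ g ∧ sim q' (resetV R v) (resetV R v'))

/-- Lifting of a simulation to sets of valuations: `Z ≼_q Z'`. -/
def preZ {Q X : Type*} (sim : Q → Val X → Val X → Prop) (q : Q)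
    (Z Z' : Set (Val X)) : Prop :=
  ∀ v ∈ Z, ∃ v' ∈ Z', sim q v v'

/-- Equivalence induced by the simulation preorder: `Z ∼_q Z'`. -/
def eqvZ {Q X : Type*} (sim : Q → Val X → Val X → Prop) (q : Q)
    (Z Z' : Set (Val X)) : Prop :=
  preZ sim q Z Z' ∧ preZ sim q Z' Z

/-- Nodes of the zone graph. -/
abbrev Node (Q X : Type*) := Q × Set (Val X)

/-- A state of the rule-based fixed point computation: a set `𝒮` of pairs
`[(q,Z),(q',Z')]` meaning `(q,Z) ∈ 𝔖` and `(q',Z') ∈ S_{(q,Z)}`. -/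
abbrev RState (Q X : Type*) := Set (Node Q X × Node Q X)

/-- The Internal, Push and Pop inductive rules (the Start rule corresponds to
the initial state `{((q₀,Z₀),(q₀,Z₀))}`). -/
inductive RuleStep {Q X Γ : Type*} (A : PDTA Q X Γ) (sim : Q → Val X → Val X → Prop) :
    RState Q X → RState Q X → Prop
  | internal {𝒮 : RState Q X} {q q' q'' : Q} {Z Z' : Set (Val X)}
      {g : Set (Val X)} {R : Set X}
      (h1 : ((q, Z), (q', Z')) ∈ 𝒮)
      (ht : (q', g, StackOp.nop, R, q'') ∈ A.trans)
      (hne : succZ g R Z' ≠ ∅)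
      (hnew : ¬ ∃ Z''', ((q, Z), (q'', Z''')) ∈ 𝒮 ∧ preZ sim q'' (succZ g R Z') Z''') :
      RuleStep A sim 𝒮 (insert ((q, Z), (q'', succZ g R Z')) 𝒮)
  | push {𝒮 : RState Q X} {q q' q'' : Q} {Z Z' : Set (Val X)} {a : Γ}
      {g : Set (Val X)} {R : Set X}
      (h1 : ((q, Z), (q', Z')) ∈ 𝒮)
      (ht : (q', g, StackOp.push a, R, q'') ∈ A.trans)
      (hne : succZ g R Z' ≠ ∅)
      (hnew : ¬ ∃ Z''', (∃ nd, ((q'', Z'''), nd) ∈ 𝒮) ∧ eqvZ sim q'' (succZ g R Z') Z''') :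
      RuleStep A sim 𝒮 (insert ((q'', succZ g R Z'), (q'', succZ g R Z')) 𝒮)
  | pop {𝒮 : RState Q X} {q q' q'' q₁' q₂ : Q}
      {Z Z' Z₁ Z₁' : Set (Val X)} {a : Γ}
      {g g₁ : Set (Val X)} {R R₁ : Set X}
      (h1 : ((q, Z), (q', Z')) ∈ 𝒮)
      (h2 : ((q'', Z₁), (q₁', Z₁')) ∈ 𝒮)
      (ht : (q', g, StackOp.push a, R, q'') ∈ A.trans)
      (ht1 : (q₁', g₁, StackOp.pop a, R₁, q₂) ∈ A.trans)
      (heq : eqvZ sim q'' (succZ g R Z') Z₁)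
      (hne : succZ g₁ R₁ Z₁' ≠ ∅)
      (hnew : ¬ ∃ Z₂', ((q, Z), (q₂, Z₂')) ∈ 𝒮 ∧ preZ sim q₂ (succZ g₁ R₁ Z₁') Z₂') :
      RuleStep A sim 𝒮 (insert ((q, Z), (q₂, succZ g₁ R₁ Z₁')) 𝒮)

/-- Invariant of the fixed point computation: roots with the same state are
pairwise non-equivalent, and within each `S_{(q,Z)}` nodes with the same state
are pairwise non-equivalent. -/
def PDTAInv {Q X : Type*} (sim : Q → Val X → Val X → Prop) (𝒮 : RState Q X) : Prop :=
  (∀ q (Z₁ Z₂ : Set (Val X)), (∃ nd, ((q, Z₁), nd) ∈ 𝒮) → (∃ nd, ((q, Z₂), nd) ∈ 𝒮) →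
      eqvZ sim q Z₁ Z₂ → Z₁ = Z₂) ∧
  (∀ (r : Node Q X) q (Z₁ Z₂ : Set (Val X)), (r, (q, Z₁)) ∈ 𝒮 → (r, (q, Z₂)) ∈ 𝒮 →
      eqvZ sim q Z₁ Z₂ → Z₁ = Z₂)

lemma preZ_refl' {Q X : Type*} {sim : Q → Val X → Val X → Prop}
    (hrefl : ∀ q (v : Val X), sim q v v) (q : Q) (Z : Set (Val X)) : preZ sim q Z Z :=
  fun v hv => ⟨v, hv, hrefl q v⟩

lemma preZ_trans' {Q X : Type*} {sim : Q → Val X → Val X → Prop}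
    (htrans : ∀ q (v₁ v₂ v₃ : Val X), sim q v₁ v₂ → sim q v₂ v₃ → sim q v₁ v₃)
    {q : Q} {Z₁ Z₂ Z₃ : Set (Val X)} (h12 : preZ sim q Z₁ Z₂) (h23 : preZ sim q Z₂ Z₃) :
    preZ sim q Z₁ Z₃ := by
  intro v hv
  obtain ⟨w, hw, hs⟩ := h12 v hv
  obtain ⟨u, hu, hs'⟩ := h23 w hw
  exact ⟨u, hu, htrans q v w u hs hs'⟩

lemma ruleStep_inv {Q X Γ : Type*} {A : PDTA Q X Γ} {sim : Q → Val X → Val X → Prop}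
    (hrefl : ∀ q (v : Val X), sim q v v)
    {𝒮 𝒮' : RState Q X} (hI : PDTAInv sim 𝒮) (h : RuleStep A sim 𝒮 𝒮') :
    PDTAInv sim 𝒮' := by
  cases h with
  | @internal q q' q'' Z Z' g R h1 ht hne hnew =>
    constructor
    · rintro a B₁ B₂ ⟨nd₁, h₁⟩ ⟨nd₂, h₂⟩ heqv
      apply hI.1 a B₁ B₂ _ _ heqv
      · rcases Set.mem_insert_iff.1 h₁ with hp₁ | hp₁
        · obtain ⟨hr, -⟩ := Prod.mk.inj hp₁
          exact hr ▸ ⟨(q', Z'), h1⟩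
        · exact ⟨nd₁, hp₁⟩
      · rcases Set.mem_insert_iff.1 h₂ with hp₂ | hp₂
        · obtain ⟨hr, -⟩ := Prod.mk.inj hp₂
          exact hr ▸ ⟨(q', Z'), h1⟩
        · exact ⟨nd₂, hp₂⟩
    · intro r s W₁ W₂ hm₁ hm₂ heqv
      rcases Set.mem_insert_iff.1 hm₁ with hp₁ | hp₁ <;>
        rcases Set.mem_insert_iff.1 hm₂ with hp₂ | hp₂
      · obtain ⟨-, h'⟩ := Prod.mk.inj hp₁
        obtain ⟨-, h''⟩ := Prod.mk.inj hp₂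
        exact (Prod.mk.inj h').2.trans ((Prod.mk.inj h'').2).symm
      · obtain ⟨hr, h'⟩ := Prod.mk.inj hp₁
        obtain ⟨hs, hW⟩ := Prod.mk.inj h'
        subst hr; subst hs; subst hW
        exact absurd ⟨W₂, hp₂, heqv.1⟩ hnew
      · obtain ⟨hr, h'⟩ := Prod.mk.inj hp₂
        obtain ⟨hs, hW⟩ := Prod.mk.inj h'
        subst hr; subst hs; subst hW
        exact absurd ⟨W₁, hp₁, heqv.2⟩ hnew
      · exact hI.2 r s W₁ W₂ hp₁ hp₂ heqv
  | @push q q' q'' Z Z' a g R h1 ht hne hnew =>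
    constructor
    · rintro b B₁ B₂ ⟨nd₁, h₁⟩ ⟨nd₂, h₂⟩ heqv
      rcases Set.mem_insert_iff.1 h₁ with hp₁ | hp₁ <;>
        rcases Set.mem_insert_iff.1 h₂ with hp₂ | hp₂
      · obtain ⟨h', -⟩ := Prod.mk.inj hp₁
        obtain ⟨h'', -⟩ := Prod.mk.inj hp₂
        exact (Prod.mk.inj h').2.trans ((Prod.mk.inj h'').2).symm
      · obtain ⟨h', -⟩ := Prod.mk.inj hp₁
        obtain ⟨hb, hB⟩ := Prod.mk.inj h'
        subst hb; subst hB
        exact absurd ⟨B₂, ⟨nd₂, hp₂⟩, heqv⟩ hnew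
      · obtain ⟨h', -⟩ := Prod.mk.inj hp₂
        obtain ⟨hb, hB⟩ := Prod.mk.inj h'
        subst hb; subst hB
        exact absurd ⟨B₁, ⟨nd₁, hp₁⟩, ⟨heqv.2, heqv.1⟩⟩ hnew
      · exact hI.1 b B₁ B₂ ⟨nd₁, hp₁⟩ ⟨nd₂, hp₂⟩ heqv
    · intro r s W₁ W₂ hm₁ hm₂ heqv
      rcases Set.mem_insert_iff.1 hm₁ with hp₁ | hp₁ <;>
        rcases Set.mem_insert_iff.1 hm₂ with hp₂ | hp₂
      · obtain ⟨-, h'⟩ := Prod.mk.inj hp₁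
        obtain ⟨-, h''⟩ := Prod.mk.inj hp₂
        exact (Prod.mk.inj h').2.trans ((Prod.mk.inj h'').2).symm
      · obtain ⟨hr, h'⟩ := Prod.mk.inj hp₁
        subst hr
        exact absurd ⟨succZ g R Z', ⟨(s, W₂), hp₂⟩,
          ⟨preZ_refl' hrefl _ _, preZ_refl' hrefl _ _⟩⟩ hnew
      · obtain ⟨hr, h'⟩ := Prod.mk.inj hp₂
        subst hr
        exact absurd ⟨succZ g R Z', ⟨(s, W₁), hp₁⟩,
          ⟨preZ_refl' hrefl _ _, preZ_refl' hrefl _ _⟩⟩ hnew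
      · exact hI.2 r s W₁ W₂ hp₁ hp₂ heqv
  | @pop q q' q'' q₁' q₂ Z Z' Z₁ Z₁' a g g₁ R R₁ h1 h2 ht ht1 heq hne hnew =>
    constructor
    · rintro b B₁ B₂ ⟨nd₁, h₁⟩ ⟨nd₂, h₂⟩ heqv
      apply hI.1 b B₁ B₂ _ _ heqv
      · rcases Set.mem_insert_iff.1 h₁ with hp₁ | hp₁
        · obtain ⟨hr, -⟩ := Prod.mk.inj hp₁
          exact hr ▸ ⟨(q', Z'), h1⟩
        · exact ⟨nd₁, hp₁⟩
      · rcases Set.mem_insert_iff.1 h₂ with hp₂ | hp₂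
        · obtain ⟨hr, -⟩ := Prod.mk.inj hp₂
          exact hr ▸ ⟨(q', Z'), h1⟩
        · exact ⟨nd₂, hp₂⟩
    · intro r s W₁ W₂ hm₁ hm₂ heqv
      rcases Set.mem_insert_iff.1 hm₁ with hp₁ | hp₁ <;>
        rcases Set.mem_insert_iff.1 hm₂ with hp₂ | hp₂
      · obtain ⟨-, h'⟩ := Prod.mk.inj hp₁
        obtain ⟨-, h''⟩ := Prod.mk.inj hp₂
        exact (Prod.mk.inj h').2.trans ((Prod.mk.inj h'').2).symm
      · obtain ⟨hr, h'⟩ := Prod.mk.inj hp₁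
        obtain ⟨hs, hW⟩ := Prod.mk.inj h'
        subst hr; subst hs; subst hW
        exact absurd ⟨W₂, hp₂, heqv.1⟩ hnew
      · obtain ⟨hr, h'⟩ := Prod.mk.inj hp₂
        obtain ⟨hs, hW⟩ := Prod.mk.inj h'
        subst hr; subst hs; subst hW
        exact absurd ⟨W₁, hp₁, heqv.2⟩ hnew
      · exact hI.2 r s W₁ W₂ hp₁ hp₂ heqv

lemma ruleStep_ssubset {Q X Γ : Type*} {A : PDTA Q X Γ} {sim : Q → Val X → Val X → Prop}
    (hrefl : ∀ q (v : Val X), sim q v v)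
    {𝒮 𝒮' : RState Q X} (h : RuleStep A sim 𝒮 𝒮') : 𝒮 ⊂ 𝒮' := by
  cases h with
  | @internal q q' q'' Z Z' g R h1 ht hne hnew =>
    refine Set.ssubset_insert fun hmem => hnew ⟨_, hmem, preZ_refl' hrefl _ _⟩
  | @push q q' q'' Z Z' a g R h1 ht hne hnew =>
    refine Set.ssubset_insert fun hmem =>
      hnew ⟨_, ⟨_, hmem⟩, ⟨preZ_refl' hrefl _ _, preZ_refl' hrefl _ _⟩⟩
  | @pop q q' q'' q₁' q₂ Z Z' Z₁ Z₁' a g g₁ R R₁ h1 h2 ht ht1 heq hne hnew =>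
    refine Set.ssubset_insert fun hmem => hnew ⟨_, hmem, preZ_refl' hrefl _ _⟩

/-- Finiteness of the fixed point computation: if the simulation preorder is
strongly finite (the induced equivalence `∼_q` has finite index for each `q`),
then in any application of the Start/Internal/Push/Pop rules the set of roots
and each set `S_{(q,Z)}` remain finite, and no infinite sequence of rule
applications exists, so a fixed point is reached in finitely many steps. -/
theorem stmt10 {Q X Γ : Type*} [Finite Q] (A : PDTA Q X Γ)
    (sim : Q → Val X → Val X → Prop)
    (hrefl : ∀ q (v : Val X), sim q v v)
    (htrans : ∀ q (v₁ v₂ v₃ : Val X), sim q v₁ v₂ → sim q v₂ v₃ → sim q v₁ v₃)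
    (hsf : ∀ q : Q, ∃ T : Set (Set (Val X)), T.Finite ∧
      ∀ Z : Set (Val X), ∃ Z' ∈ T, eqvZ sim q Z Z')
    (q₀ : Q) (Z₀ : Set (Val X)) :
    (∀ 𝒮 : RState Q X,
      Relation.ReflTransGen (RuleStep A sim) {((q₀, Z₀), (q₀, Z₀))} 𝒮 →
        ({r : Node Q X | ∃ nd, (r, nd) ∈ 𝒮}).Finite ∧
        ∀ r : Node Q X, ({nd : Node Q X | (r, nd) ∈ 𝒮}).Finite) ∧
    ¬ ∃ f : ℕ → RState Q X, f 0 = {((q₀, Z₀), (q₀, Z₀))} ∧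
        ∀ m, RuleStep A sim (f m) (f (m + 1)) := by
    classical
  choose T hTfin hTrep using hsf
  choose rep hrepT hrepeq using hTrep
  -- the representative map into a fixed finite set
  set Φ : Node Q X → Q × Set (Val X) := fun p => (p.1, rep p.1 p.2) with hΦ
  set F : Set (Q × Set (Val X)) := (Set.univ : Set Q) ×ˢ ⋃ q, T q with hF
  have hFfin : F.Finite := Set.Finite.prod Set.finite_univ (Set.finite_iUnion hTfin)
  have hΦmem : ∀ p : Node Q X, Φ p ∈ F := by
    intro p
    exact ⟨Set.mem_univ _, Set.mem_iUnion.2 ⟨p.1, hrepT p.1 p.2⟩⟩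
  have repEq : ∀ q (Z₁ Z₂ : Set (Val X)), rep q Z₁ = rep q Z₂ → eqvZ sim q Z₁ Z₂ := by
    intro q Z₁ Z₂ hre
    have h₁ := hrepeq q Z₁
    have h₂ := hrepeq q Z₂
    rw [hre] at h₁
    exact ⟨preZ_trans' htrans h₁.1 h₂.2, preZ_trans' htrans h₂.1 h₁.2⟩
  -- invariant holds at the start and is preserved
  have hInv0 : PDTAInv sim ({((q₀, Z₀), (q₀, Z₀))} : RState Q X) := by
    constructor
    · rintro q Z₁ Z₂ ⟨nd₁, h₁⟩ ⟨nd₂, h₂⟩ _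
      rw [Set.mem_singleton_iff] at h₁ h₂
      exact ((Prod.mk.inj (Prod.mk.inj h₁).1).2).trans
        ((Prod.mk.inj (Prod.mk.inj h₂).1).2).symm
    · intro r q Z₁ Z₂ h₁ h₂ _
      rw [Set.mem_singleton_iff] at h₁ h₂
      exact ((Prod.mk.inj (Prod.mk.inj h₁).2).2).trans
        ((Prod.mk.inj (Prod.mk.inj h₂).2).2).symm
  have hreach : ∀ 𝒮 : RState Q X,
      Relation.ReflTransGen (RuleStep A sim) {((q₀, Z₀), (q₀, Z₀))} 𝒮 → PDTAInv sim 𝒮 := by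
    intro 𝒮 h
    induction h with
    | refl => exact hInv0
    | tail _ hstep ih => exact ruleStep_inv hrefl ih hstep
  -- injectivity of the representative map on invariant states
  have hInj : ∀ 𝒮 : RState Q X, PDTAInv sim 𝒮 →
      Set.InjOn (fun p : Node Q X × Node Q X => (Φ p.1, Φ p.2)) 𝒮 := by
    rintro 𝒮 hI ⟨⟨a₁, B₁⟩, ⟨s₁, W₁⟩⟩ hp₁ ⟨⟨a₂, B₂⟩, ⟨s₂, W₂⟩⟩ hp₂ heq
    simp only [hΦ, Prod.mk.injEq] at heq
    obtain ⟨⟨ha, hre⟩, ⟨hs, hre'⟩⟩ := heq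
    subst ha; subst hs
    have hB : B₁ = B₂ := hI.1 a₁ B₁ B₂ ⟨_, hp₁⟩ ⟨_, hp₂⟩ (repEq _ _ _ hre)
    subst hB
    have hW : W₁ = W₂ := hI.2 (a₁, B₁) s₁ W₁ W₂ hp₁ hp₂ (repEq _ _ _ hre')
    subst hW
    rfl
  have hfin : ∀ 𝒮 : RState Q X, PDTAInv sim 𝒮 → 𝒮.Finite := by
    intro 𝒮 hI
    refine Set.Finite.of_finite_image (Set.Finite.subset (hFfin.prod hFfin) ?_) (hInj 𝒮 hI)
    rintro ⟨u, v⟩ ⟨p, hp, hpe⟩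
    rw [← hpe]
    exact ⟨hΦmem _, hΦmem _⟩
  have hcard : ∀ 𝒮 : RState Q X, PDTAInv sim 𝒮 → 𝒮.ncard ≤ (F ×ˢ F).ncard := by
    intro 𝒮 hI
    rw [← Set.ncard_image_of_injOn (hInj 𝒮 hI)]
    refine Set.ncard_le_ncard ?_ (hFfin.prod hFfin)
    rintro ⟨u, v⟩ ⟨p, hp, hpe⟩
    rw [← hpe]
    exact ⟨hΦmem _, hΦmem _⟩
  constructor
  · intro 𝒮 h
    have h𝒮 : 𝒮.Finite := hfin 𝒮 (hreach 𝒮 h)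
    constructor
    · have : {r : Node Q X | ∃ nd, (r, nd) ∈ 𝒮} ⊆ Prod.fst '' 𝒮 := by
        rintro r ⟨nd, hnd⟩
        exact ⟨(r, nd), hnd, rfl⟩
      exact (h𝒮.image _).subset this
    · intro r
      have : {nd : Node Q X | (r, nd) ∈ 𝒮} ⊆ Prod.snd '' 𝒮 := by
        rintro nd hnd
        exact ⟨(r, nd), hnd, rfl⟩
      exact (h𝒮.image _).subset this
  · rintro ⟨f, h0, hstep⟩
    have hre : ∀ m, Relation.ReflTransGen (RuleStep A sim) {((q₀, Z₀), (q₀, Z₀))} (f m) := by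
      intro m
      induction m with
      | zero => rw [h0]
      | succ m ih => exact ih.tail (hstep m)
    have hmono : ∀ m, m + 1 ≤ (f m).ncard := by
      intro m
      induction m with
      | zero =>
        rw [h0, Set.ncard_singleton]
      | succ m ih =>
        have hlt : (f m).ncard < (f (m + 1)).ncard :=
          Set.ncard_lt_ncard (ruleStep_ssubset hrefl (hstep m))
            (hfin _ (hreach _ (hre (m + 1))))
        omega
    have hb := hcard (f ((F ×ˢ F).ncard)) (hreach _ (hre _))
    have := hmono ((F ×ˢ F).ncard)
    omega
end

section
/- Soundness of the PDTA inductive rules: the invariant "for all (q,Z) ∈ 𝔖, (q',Z') ∈ S_{(q,Z)}, and v' ∈ Z', there is a run (q,v,ε) →* (q',v'',ε) with v ∈ Z and (q',v') ≼ (q',v'')" holds after the Start rule and is preserved by each application of the Internal, Push, and Pop rules; hence it holds at any fixed point. -/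
open Classical

section Aux

variable {Q X Γ : Type*} (A : PDTA Q X Γ)

/-- Convert a `ReflTransGen` chain of steps into a run in the sense of `IsRun`. -/
lemma rtg_to_run {c₁ c₂ : Config Q X Γ}
    (h : Relation.ReflTransGen (PStep A) c₁ c₂) :
    ∃ n c, IsRun A n c ∧ c 0 = c₁ ∧ c n = c₂ := by
  induction h with
  | refl => exact ⟨0, fun _ => c₁, fun k hk => absurd hk (Nat.not_lt_zero k), rfl, rfl⟩
  | @tail b c hab hbc ih =>
      obtain ⟨n, e, hrun, h0, hn⟩ := ih
      refine ⟨n + 1, fun k => if k ≤ n then e k else c, ?_, ?_, ?_⟩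
      · intro k hk
        rcases Nat.lt_or_ge k n with hkn | hkn
        · simpa [Nat.le_of_lt hkn, Nat.succ_le_of_lt hkn] using hrun k hkn
        · have hk' : k = n := Nat.le_antisymm (Nat.lt_succ_iff.1 hk) hkn
          subst hk'
          simpa [hn] using hbc
      · simp [h0]
      · simp
  
/-- A single step lifts under putting an extra symbol at the bottom of the stack. -/
lemma pstep_cons {a : Γ} {q q' : Q} {v v' : Val X} {χ χ' : List Γ}
    (h : PStep A (q, v, χ) (q', v', χ')) :
    PStep A (q, v, a :: χ) (q', v', a :: χ') := by
  cases h with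
  | delay => exact PStep.delay _ _ _ _ (by assumption)
  | disc _ _ g op R _ _ _ ht hg hop =>
      refine PStep.disc _ _ g op R _ _ _ ht hg ?_
      cases op <;> simp [opOK] at hop ⊢ <;> simp [hop]

lemma rtg_cons {a : Γ} {c₁ c₂ : Config Q X Γ}
    (h : Relation.ReflTransGen (PStep A) c₁ c₂) :
    Relation.ReflTransGen (PStep A) (c₁.1, c₁.2.1, a :: c₁.2.2)
      (c₂.1, c₂.2.1, a :: c₂.2.2) := by
  induction h with
  | refl => exact .refl
  | @tail b c hab hbc ih =>
      refine ih.tail ?_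
      obtain ⟨qb, vb, χb⟩ := b
      obtain ⟨qc, vc, χc⟩ := c
      exact pstep_cons A hbc

variable {sim : Q → Val X → Val X → Prop}

lemma pstep_sim (hsim : IsSim A sim) {q q' : Q} {v v' : Val X} {χ χ' : List Γ}
    (h : PStep A (q, v, χ) (q', v', χ')) {w : Val X} (hw : sim q v w) :
    ∃ w', PStep A (q, w, χ) (q', w', χ') ∧ sim q' v' w' := by
  cases h with
  | delay _ _ _ δ hδ =>
      exact ⟨addD w δ, PStep.delay _ _ _ δ hδ, hsim.1 _ _ _ δ hδ hw⟩
  | disc _ _ g op R _ _ _ ht hg hop =>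
      obtain ⟨hg', hs⟩ := hsim.2 _ _ _ _ _ ht _ _ hw hg
      exact ⟨resetV R w, PStep.disc _ _ g op R w _ _ ht hg' hop, hs⟩

lemma rtg_sim (hsim : IsSim A sim) {c₁ c₂ : Config Q X Γ}
    (h : Relation.ReflTransGen (PStep A) c₁ c₂) :
    ∀ w : Val X, sim c₁.1 c₁.2.1 w →
      ∃ w', Relation.ReflTransGen (PStep A) (c₁.1, w, c₁.2.2) (c₂.1, w', c₂.2.2) ∧
        sim c₂.1 c₂.2.1 w' := by
  induction h with
  | refl => exact fun w hw => ⟨w, .refl, hw⟩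
  | @tail b c hab hbc ih =>
      intro w hw
      obtain ⟨w', hrtg, hw'⟩ := ih w hw
      obtain ⟨qb, vb, χb⟩ := b
      obtain ⟨qc, vc, χc⟩ := c
      obtain ⟨w'', hstep, hw''⟩ := pstep_sim A hsim hbc hw'
      exact ⟨w'', hrtg.tail hstep, hw''⟩

lemma mem_succZ {g : Set (Val X)} {R : Set X} {Z : Set (Val X)} {w : Val X}
    (h : w ∈ succZ g R Z) :
    ∃ u, u ∈ g ∧ u ∈ Z ∧ ∃ δ : ℝ, 0 ≤ δ ∧ w = addD (resetV R u) δ := by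
  obtain ⟨x, ⟨u, ⟨hug, huZ⟩, rfl⟩, δ, hδ, rfl⟩ := h
  exact ⟨u, hug, huZ, δ, hδ, rfl⟩

end Aux

/-- Soundness of the PDTA inductive rules: the invariant — for all
`(q,Z) ∈ 𝔖`, `(q',Z') ∈ S_{(q,Z)}` and `v' ∈ Z'`, there is a well-nested run
`(q,v,ε) →* (q',v'',ε)` with `v ∈ Z` and `(q',v') ≼ (q',v'')` — holds after
the Start rule and is preserved by the Internal/Push/Pop rules, hence holds
in every state (in particular any fixed point) reachable by the rules. -/

theorem stmt12 {Q X Γ : Type*} (A : PDTA Q X Γ) (sim : Q → Val X → Val X → Prop)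
    (hsim : IsSim A sim)
    (hrefl : ∀ q (v : Val X), sim q v v)
    (htrans : ∀ q (v₁ v₂ v₃ : Val X), sim q v₁ v₂ → sim q v₂ v₃ → sim q v₁ v₃)
    (q₀ : Q) (Z₀ : Set (Val X)) (𝒮 : RState Q X)
    (hreach : Relation.ReflTransGen (RuleStep A sim) {((q₀, Z₀), (q₀, Z₀))} 𝒮) :
    ∀ (q : Q) (Z : Set (Val X)) (q' : Q) (Z' : Set (Val X)),
      ((q, Z), (q', Z')) ∈ 𝒮 → ∀ v' ∈ Z',
        ∃ v ∈ Z, ∃ (n : ℕ) (c : ℕ → Config Q X Γ), IsRun A n c ∧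
          c 0 = (q, v, ([] : List Γ)) ∧
          ∃ v'' : Val X, c n = (q', v'', ([] : List Γ)) ∧ sim q' v' v'' := by
  -- It suffices to prove the `ReflTransGen` version of the invariant.
  suffices H : ∀ (q : Q) (Z : Set (Val X)) (q' : Q) (Z' : Set (Val X)),
      ((q, Z), (q', Z')) ∈ 𝒮 → ∀ v' ∈ Z', ∃ v ∈ Z, ∃ v'' : Val X,
        Relation.ReflTransGen (PStep A) ((q, v, ([] : List Γ)) : Config Q X Γ)
          (q', v'', ([] : List Γ)) ∧ sim q' v' v'' by
    intro q Z q' Z' hmem v' hv'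
    obtain ⟨v, hv, v'', hrtg, hs⟩ := H q Z q' Z' hmem v' hv'
    obtain ⟨n, c, hrun, h0, hn⟩ := rtg_to_run A hrtg
    exact ⟨v, hv, n, c, hrun, h0, v'', hn, hs⟩
  induction hreach with
  | refl =>
      intro q Z q' Z' hmem v' hv'
      obtain ⟨⟨rfl, rfl⟩, rfl, rfl⟩ : ((q, Z) = (q₀, Z₀)) ∧ (q' = q₀) ∧ (Z' = Z₀) := by
        simpa [Prod.ext_iff] using hmem
      exact ⟨v', hv', v', .refl, hrefl _ _⟩
  | @tail b 𝒮' hab hbc ih =>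
      cases hbc with
      | @internal q q' q'' Z Z' g R h1 ht hne hnew =>
          intro p W p' W' hmem v' hv'
          rcases Set.mem_insert_iff.1 hmem with heq | hold
          · obtain ⟨⟨rfl, rfl⟩, rfl, rfl⟩ :
                ((p, W) = (q, Z)) ∧ (p' = q'') ∧ (W' = succZ g R Z') := by
              simpa [Prod.ext_iff] using heq
            obtain ⟨u, hug, huZ', δ, hδ, rfl⟩ := mem_succZ hv'
            obtain ⟨v, hv, w, hrtg, hs⟩ := ih q Z q' Z' h1 u huZ'
            obtain ⟨hwg, hws⟩ := hsim.2 _ _ _ _ _ ht _ _ hs hug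
            refine ⟨v, hv, addD (resetV R w) δ, ?_, hsim.1 _ _ _ δ hδ hws⟩
            exact (hrtg.tail (PStep.disc q' _ g .nop R w [] [] ht hwg rfl)).tail
              (PStep.delay _ (resetV R w) [] δ hδ)
          · exact ih p W p' W' hold v' hv'
      | @push q q' q'' Z Z' a g R h1 ht hne hnew =>
          intro p W p' W' hmem v' hv'
          rcases Set.mem_insert_iff.1 hmem with heq | hold
          · obtain ⟨⟨rfl, rfl⟩, rfl, rfl⟩ :
                ((p, W) = (q'', succZ g R Z')) ∧ (p' = q'') ∧ (W' = succZ g R Z') := by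
              simpa [Prod.ext_iff] using heq
            exact ⟨v', hv', v', .refl, hrefl _ _⟩
          · exact ih p W p' W' hold v' hv'
      | @pop q q' q'' q₁' q₂ Z Z' Z₁ Z₁' a g g₁ R R₁
            h1 h2 ht ht1 heq hne hnew =>
          intro p W p' W' hmem v' hv'
          rcases Set.mem_insert_iff.1 hmem with heqp | hold
          · obtain ⟨⟨rfl, rfl⟩, rfl, rfl⟩ :
                ((p, W) = (q, Z)) ∧ (p' = q₂) ∧ (W' = succZ g₁ R₁ Z₁') := by
              simpa [Prod.ext_iff] using heqp
            -- v' = addD (resetV R₁ u₁) δ with u₁ ∈ g₁ ∩ Z₁'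
            obtain ⟨u₁, hu₁g, hu₁Z, δ, hδ, rfl⟩ := mem_succZ hv'
            -- run for the pair ((q'', Z₁), (q₁', Z₁')) starting from u₁
            obtain ⟨w₁, hw₁, x, hrtg₁, hsx⟩ := ih q'' Z₁ q₁' Z₁' h2 u₁ hu₁Z
            -- w₁ ∈ Z₁ is simulated by some y ∈ succZ g R Z'
            obtain ⟨y, hy, hw₁y⟩ := heq.2 w₁ hw₁
            obtain ⟨u, hug, huZ', δ', hδ', rfl⟩ := mem_succZ hy
            -- run for the pair ((q, Z), (q', Z')) starting from u
            obtain ⟨v, hv, w, hrtg₀, hsu⟩ := ih q Z q' Z' h1 u huZ'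
            obtain ⟨hwg, hws⟩ := hsim.2 _ _ _ _ _ ht _ _ hsu hug
            -- push step and delay: (q', w, []) →* (q'', addD (resetV R w) δ', [a])
            have hrtg₂ : Relation.ReflTransGen (PStep A)
                ((q, v, ([] : List Γ)) : Config Q X Γ)
                (q'', addD (resetV R w) δ', [a]) := by
              refine (hrtg₀.tail ?_).tail (PStep.delay q'' (resetV R w) [a] δ' hδ')
              exact PStep.disc q' q'' g (.push a) R w [] [a] ht hwg rfl
            -- sim q'' w₁ (addD (resetV R w) δ')
            have hsw₁ : sim q'' w₁ (addD (resetV R w) δ') :=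
              htrans _ _ _ _ hw₁y (hsim.1 _ _ _ δ' hδ' hws)
            -- lift the middle run to stack [a] and transport along simulation
            have hrtg₁' := rtg_cons A (a := a) hrtg₁
            obtain ⟨x', hrtg₃, hsx'⟩ :=
              rtg_sim A hsim hrtg₁' (addD (resetV R w) δ') hsw₁
            have hsu₁x' : sim q₁' u₁ x' := htrans _ _ _ _ hsx hsx'
            obtain ⟨hx'g, hx's⟩ := hsim.2 _ _ _ _ _ ht1 _ _ hsu₁x' hu₁g
            refine ⟨v, hv, addD (resetV R₁ x') δ, ?_, hsim.1 _ _ _ δ hδ hx's⟩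
            refine ((hrtg₂.trans hrtg₃).tail ?_).tail
              (PStep.delay _ (resetV R₁ x') [] δ hδ)
            exact PStep.disc q₁' _ g₁ (.pop a) R₁ x' [a] [] ht1 hx'g rfl
          · exact ih p W p' W' hold v' hv'
end
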